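/- (Refined shuffle theorem) Let σ = σ_1⋯σ_m and π = π_1⋯π_n be disjoint words with distinct positive integer entries such that σ_m < π_n. Let Sh^{sb}(σ,π) be the set of shuffles α of σ and π whose last letter is σ_m. Then Σ_{α ∈ Sh^{sb}(σ,π)} q^{maj(α)} = q^{maj(σ)+maj(π)+n} · C(m+n-1, n)_q. -/

import Mathlib

open Finset

/-- The major index of a word `w = w_1⋯w_N` with distinct entries:
`maj(w) = ∑_{i : w_i > w_{i+1}} i`. -/
def majW {N : ℕ} (w : Fin N → ℕ) : ℕ :=
  ∑ i : Fin N, if h : i.1 + 1 < N then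
    (if w ⟨i.1 + 1, h⟩ < w i then i.1 + 1 else 0) else 0

/-- The shuffle of the words `σ` (of length `m`) and `π` (of length `n`) determined by
the set `s` of positions receiving the letters of `σ` (in order); the complement of `s`
receives the letters of `π` (in order).  (Junk values are used if `s.card ≠ m`.) -/
def shuffleWord {m n : ℕ} (σ : Fin m → ℕ) (π : Fin n → ℕ)
    (s : Finset (Fin (m + n))) : Fin (m + n) → ℕ := fun i =>
  if i ∈ s then
    (if h : (s.filter fun j => j < i).card < m then σ ⟨_, h⟩ else 0)
  else
    (if h : ((sᶜ).filter fun j => j < i).card < n then π ⟨_, h⟩ else 0)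

/-- The `q`-factorial `[n]_q!`. -/
def qfac {K : Type*} [CommSemiring K] (q : K) (n : ℕ) : K :=
  ∏ i ∈ Finset.range n, ∑ j ∈ Finset.range (i + 1), q ^ j

noncomputable def geo (k : ℕ) : RatFunc ℚ := ∑ j ∈ range k, RatFunc.X ^ j

lemma qfac_succ (k : ℕ) : qfac (RatFunc.X : RatFunc ℚ) (k+1) = qfac RatFunc.X k * geo (k+1) := by
  simp [qfac, geo, Finset.prod_range_succ]

lemma geo_ne_zero {k : ℕ} (hk : 1 ≤ k) : geo k ≠ 0 := by
  have : geo k = algebraMap (Polynomial ℚ) (RatFunc ℚ) (∑ j ∈ range k, Polynomial.X ^ j) := by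
    simp [geo, map_sum, RatFunc.algebraMap_X]
  rw [this]
  refine RatFunc.algebraMap_ne_zero ?_
  intro h
  have := congrArg (Polynomial.eval 1) h
  simp [Polynomial.eval_finset_sum] at this
  omega

lemma qfac_ne_zero (k : ℕ) : qfac (RatFunc.X : RatFunc ℚ) k ≠ 0 := by
  induction k with
  | zero => simp [qfac]
  | succ n ih =>
    rw [qfac_succ]
    exact mul_ne_zero ih (geo_ne_zero (by omega))

noncomputable def B (x y : ℕ) : RatFunc ℚ := qfac RatFunc.X (x+y) / (qfac RatFunc.X x * qfac RatFunc.X y)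

lemma geo_add (x y : ℕ) : geo (x + y) = geo y + RatFunc.X ^ y * geo x := by
  rw [geo, add_comm x y, Finset.sum_range_add, geo, geo, Finset.mul_sum]
  congr 1
  exact Finset.sum_congr rfl fun i _ => (pow_add _ _ _)

lemma B_comm (x y : ℕ) : B x y = B y x := by
  rw [B, B, add_comm, mul_comm]

lemma B_zero (x : ℕ) : B x 0 = 1 := by
  rw [B]
  simp [qfac]
  exact qfac_ne_zero x

lemma zero_B (y : ℕ) : B 0 y = 1 := by rw [B_comm, B_zero]

lemma pascal1 (x y : ℕ) : B (x+1) (y+1) = B (x+1) y + RatFunc.X ^ (y+1) * B x (y+1) := by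
  rw [B, B, B, mul_div_assoc']
  rw [div_add_div _ _ (mul_ne_zero (qfac_ne_zero _) (qfac_ne_zero _))
      (mul_ne_zero (qfac_ne_zero _) (qfac_ne_zero _))]
  rw [div_eq_div_iff (mul_ne_zero (qfac_ne_zero _) (qfac_ne_zero _))
      (mul_ne_zero (mul_ne_zero (qfac_ne_zero _) (qfac_ne_zero _))
        (mul_ne_zero (qfac_ne_zero _) (qfac_ne_zero _)))]
  have h1 : qfac (RatFunc.X : RatFunc ℚ) (x+1+(y+1)) = qfac RatFunc.X (x+1+y) * geo (x+1+(y+1)) := by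
    rw [show x+1+(y+1) = (x+1+y)+1 by ring, qfac_succ]
  have hg : geo (x+1+(y+1)) = geo (y+1) + RatFunc.X ^ (y+1) * geo (x+1) := geo_add (x+1) (y+1)
  rw [h1, hg, qfac_succ x, qfac_succ y, show x+1+y = x+(y+1) by ring]
  ring
lemma pascal2 (x y : ℕ) : B (x+1) (y+1) = RatFunc.X ^ (x+1) * B (x+1) y + B x (y+1) := by
  rw [B_comm, pascal1 y x, B_comm (y+1) x, B_comm y (x+1), add_comm]

def shw (u v : ℕ → ℕ) (s : Finset ℕ) (i : ℕ) : ℕ :=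
  if i ∈ s then u ((s.filter (· < i)).card) else v (i - (s.filter (· < i)).card)

def majN (N : ℕ) (w : ℕ → ℕ) : ℕ := ∑ i ∈ range (N-1), if w (i+1) < w i then i+1 else 0

def D (a b : ℕ) : Finset (Finset ℕ) :=
  ((range (a+b)).powersetCard a).filter (fun s => a+b-1 ∈ s)

lemma mem_D {a b : ℕ} {s : Finset ℕ} :
    s ∈ D a b ↔ s ⊆ range (a+b) ∧ s.card = a ∧ a+b-1 ∈ s := by
  simp only [D, Finset.mem_filter, Finset.mem_powersetCard]
  tauto

lemma majN_peel (K : ℕ) (w : ℕ → ℕ) :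
    majN (K+2) w = majN (K+1) w + (if w (K+1) < w K then K+1 else 0) := by
  simp [majN, Finset.sum_range_succ]

lemma majN_congr {N : ℕ} {w w' : ℕ → ℕ} (h : ∀ i < N, w i = w' i) : majN N w = majN N w' := by
  unfold majN
  refine Finset.sum_congr rfl fun i hi => ?_
  rw [Finset.mem_range] at hi
  rw [h i (by omega), h (i+1) (by omega)]

lemma filter_lt_last {L : ℕ} {s : Finset ℕ} (hs : s ⊆ range (L+1)) (hL : L ∈ s) :
    s.filter (· < L) = s.erase L := by
  ext j
  simp only [Finset.mem_filter, Finset.mem_erase]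
  constructor
  · rintro ⟨hj, hlt⟩; exact ⟨by omega, hj⟩
  · rintro ⟨hne, hj⟩; have := Finset.mem_range.mp (hs hj); constructor; exact hj; omega

lemma shw_last {L : ℕ} {s : Finset ℕ} (u v : ℕ → ℕ) (hs : s ⊆ range (L+1)) (hL : L ∈ s) :
    shw u v s L = u (s.card - 1) := by
  rw [shw, if_pos hL, filter_lt_last hs hL, Finset.card_erase_of_mem hL]

lemma shw_last_not {L : ℕ} {s : Finset ℕ} (u v : ℕ → ℕ) (hs : s ⊆ range (L+1)) (hL : L ∉ s) :
    shw u v s L = v (L - s.card) := by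
  rw [shw, if_neg hL]
  have hf : s.filter (· < L) = s := by
    apply Finset.filter_true_of_mem
    intro j hj
    have h1 := Finset.mem_range.mp (hs hj)
    have h2 : j ≠ L := fun h => hL (h ▸ hj)
    omega
  rw [hf]

lemma shw_erase {L : ℕ} {s : Finset ℕ} (u v : ℕ → ℕ) {i : ℕ} (hi : i < L) :
    shw u v (s.erase L) i = shw u v s i := by
  have h1 : (s.erase L).filter (· < i) = s.filter (· < i) := by
    ext j
    simp only [Finset.mem_filter, Finset.mem_erase]
    constructor
    · rintro ⟨⟨_, hj⟩, hlt⟩; exact ⟨hj, hlt⟩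
    · rintro ⟨hj, hlt⟩; exact ⟨⟨by omega, hj⟩, hlt⟩
  by_cases h : i ∈ s
  · rw [shw, shw, if_pos h, if_pos (Finset.mem_erase.mpr ⟨by omega, h⟩), h1]
  · rw [shw, shw, if_neg h, if_neg (fun hh => h (Finset.mem_erase.mp hh).2), h1]

lemma compl_filter_card {M : ℕ} {t : Finset ℕ} (ht : t ⊆ range M) {i : ℕ} (hi : i < M) :
    ((range M \ t).filter (· < i)).card = i - (t.filter (· < i)).card := by
  have hfil : (range M \ t).filter (· < i) = range i \ (t.filter (· < i)) := by
    ext j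
    simp only [Finset.mem_filter, Finset.mem_sdiff, Finset.mem_range]
    constructor
    · rintro ⟨⟨hjM, hjt⟩, hji⟩
      exact ⟨hji, fun h => hjt h.1⟩
    · rintro ⟨hji, hh⟩
      refine ⟨⟨by omega, fun hjt => hh ⟨hjt, hji⟩⟩, hji⟩
  rw [hfil, Finset.card_sdiff_of_subset, Finset.card_range]
  intro j hj
  simp only [Finset.mem_filter] at hj
  exact Finset.mem_range.mpr hj.2

lemma filter_lt_card_le {t : Finset ℕ} (i : ℕ) : (t.filter (· < i)).card ≤ i := by
  calc (t.filter (· < i)).card ≤ (range i).card := by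
        apply Finset.card_le_card
        intro j hj
        simp only [Finset.mem_filter] at hj
        exact Finset.mem_range.mpr hj.2
    _ = i := Finset.card_range i

lemma shw_compl {M : ℕ} {t : Finset ℕ} (u v : ℕ → ℕ) (ht : t ⊆ range M) {i : ℕ} (hi : i < M) :
    shw u v t i = shw v u (range M \ t) i := by
  have hc := compl_filter_card ht hi
  have hle := filter_lt_card_le (t := t) i
  by_cases h : i ∈ t
  · rw [shw, shw, if_pos h, if_neg (by simp [Finset.mem_sdiff, h]), hc]
    congr 1
    omega
  · rw [shw, shw, if_neg h, if_pos (Finset.mem_sdiff.mpr ⟨Finset.mem_range.mpr hi, h⟩), hc]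

def extnd {m : ℕ} (σ : Fin m → ℕ) : ℕ → ℕ := fun i => if h : i < m then σ ⟨i, h⟩ else 0

lemma extnd_lt {m : ℕ} (σ : Fin m → ℕ) {i : ℕ} (h : i < m) : extnd σ i = σ ⟨i, h⟩ := dif_pos h

lemma majW_eq {N : ℕ} (w : Fin N → ℕ) (w' : ℕ → ℕ) (hw : ∀ (k : ℕ) (h : k < N), w' k = w ⟨k, h⟩) :
    majW w = majN N w' := by
  have step1 : majW w = ∑ k ∈ range N,
      (if h : k + 1 < N then (if w' (k+1) < w' k then k+1 else 0) else 0) := by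
    rw [majW, ← Fin.sum_univ_eq_sum_range
      (fun k => if h : k + 1 < N then (if w' (k+1) < w' k then k+1 else 0) else 0) N]
    refine Finset.sum_congr rfl fun i _ => ?_
    by_cases h : i.1 + 1 < N
    · rw [dif_pos h, dif_pos h, hw (i.1+1) h, hw i.1 i.2]
    · rw [dif_neg h, dif_neg h]
  rw [step1, majN]
  cases N with
  | zero => simp
  | succ K =>
    rw [Finset.sum_range_succ, dif_neg (by omega), add_zero]
    refine Finset.sum_congr rfl fun k hk => ?_
    rw [Finset.mem_range] at hk
    rw [dif_pos (by omega)]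


theorem main : ∀ (n : ℕ), ∀ a b : ℕ, a + b = n → 1 ≤ a →
    ∀ u v : ℕ → ℕ,
    (∀ i j, i < a → j < a → u i = u j → i = j) →
    (∀ i j, i < b → j < b → v i = v j → i = j) →
    (∀ i j, i < a → j < b → u i ≠ v j) →
    ∑ s ∈ D a b, (RatFunc.X : RatFunc ℚ) ^ majN (a+b) (shw u v s) =
      (if b = 0 then RatFunc.X ^ majN a u
       else if u (a-1) < v (b-1)
         then RatFunc.X ^ (majN a u + majN b v + b) * B (a-1) b
         else RatFunc.X ^ (majN a u + majN b v) * B (a-1) b) := by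
  intro n
  induction n using Nat.strong_induction_on with
  | _ n ih =>
  intro a b hn ha u v hu hv huv
  rcases Nat.eq_zero_or_pos b with hb | hb
  · -- base case b = 0
    subst hb
    rw [if_pos rfl]
    have hD : D a 0 = {range a} := by
      ext s
      rw [mem_D, Finset.mem_singleton]
      constructor
      · rintro ⟨hs, hcard, -⟩
        exact Finset.eq_of_subset_of_card_le hs (by rw [Finset.card_range, hcard])
      · rintro rfl
        exact ⟨Finset.Subset.refl _, by rw [Finset.card_range], Finset.mem_range.mpr (by omega)⟩
    rw [hD, Finset.sum_singleton]
    congr 1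
    apply majN_congr
    intro i hi
    rw [show a + 0 = a from rfl] at hi
    have hfil : (range a).filter (· < i) = range i := by
      ext j
      simp only [Finset.mem_filter, Finset.mem_range]
      omega
    rw [shw, if_pos (Finset.mem_range.mpr hi), hfil, Finset.card_range]
  rcases Nat.lt_or_ge a 2 with ha2 | ha2
  · -- base case a = 1
    have ha1 : a = 1 := by omega
    subst ha1
    obtain ⟨b', rfl⟩ : ∃ b', b = b'+1 := ⟨b-1, by omega⟩
    have hD : D 1 (b'+1) = {({b'+1} : Finset ℕ)} := by
      ext s
      rw [mem_D, Finset.mem_singleton]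
      constructor
      · rintro ⟨hs, hcard, hmem⟩
        rw [Finset.card_eq_one] at hcard
        obtain ⟨x, rfl⟩ := hcard
        rw [show 1+(b'+1)-1 = b'+1 from by omega, Finset.mem_singleton] at hmem
        rw [hmem]
      · rintro rfl
        refine ⟨?_, Finset.card_singleton _, ?_⟩
        · intro j hj
          rw [Finset.mem_singleton] at hj
          exact Finset.mem_range.mpr (by omega)
        · rw [show 1+(b'+1)-1 = b'+1 from by omega]
          exact Finset.mem_singleton_self _
    rw [hD, Finset.sum_singleton]
    have hsub : ({b'+1} : Finset ℕ) ⊆ range ((b'+1)+1) := by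
      intro j hj
      rw [Finset.mem_singleton] at hj
      exact Finset.mem_range.mpr (by omega)
    have hlast : shw u v {b'+1} (b'+1) = u 0 :=
      (shw_last u v hsub (Finset.mem_singleton_self _)).trans (by rw [Finset.card_singleton])
    have hbelow : ∀ i < b'+1, shw u v {b'+1} i = v i := by
      intro i hi
      have h1 : i ∉ ({b'+1} : Finset ℕ) := by
        rw [Finset.mem_singleton]; omega
      have h2 : ({b'+1} : Finset ℕ).filter (· < i) = ∅ := by
        ext j
        simp only [Finset.mem_filter, Finset.mem_singleton, Finset.notMem_empty, iff_false]
        rintro ⟨rfl, hlt⟩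
        omega
      rw [shw, if_neg h1, h2, Finset.card_empty, Nat.sub_zero]
    have hmaj : majN (1+(b'+1)) (shw u v {b'+1}) = majN (b'+1) v + (if u 0 < v b' then b'+1 else 0) := by
      rw [show 1+(b'+1) = b'+2 from by omega, majN_peel b' (shw u v {b'+1})]
      congr 1
      · exact majN_congr fun i hi => hbelow i hi
      · rw [hlast, hbelow b' (by omega)]
    rw [hmaj, if_neg (by omega : ¬ b'+1 = 0)]
    have hmaj1 : majN 1 u = 0 := by simp [majN]
    rw [show (1:ℕ)-1 = 0 from rfl, show b'+1-1 = b' from by omega, hmaj1, zero_B]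
    by_cases hcmp : u 0 < v b'
    · rw [if_pos hcmp, if_pos hcmp, pow_add, mul_one]
      ring
    · rw [if_neg hcmp, if_neg hcmp, add_zero, mul_one]
      ring
  · -- inductive step: a ≥ 2, b ≥ 1
    obtain ⟨a', rfl⟩ : ∃ a', a = a'+2 := ⟨a-2, by omega⟩
    obtain ⟨b', rfl⟩ : ∃ b', b = b'+1 := ⟨b-1, by omega⟩
    -- Step 1: peel off the last position
    have hsplit : ∑ s ∈ D (a'+2) (b'+1), (RatFunc.X : RatFunc ℚ) ^ majN ((a'+2)+(b'+1)) (shw u v s)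
        = ∑ t ∈ (range (a'+b'+2)).powersetCard (a'+1),
            (RatFunc.X : RatFunc ℚ) ^ (majN (a'+b'+2) (shw u v t)
              + (if u (a'+1) < shw u v t (a'+b'+1) then a'+b'+2 else 0)) := by
      refine Finset.sum_nbij' (fun s => s.erase (a'+b'+2)) (fun t => insert (a'+b'+2) t)
        ?_ ?_ ?_ ?_ ?_
      · intro s hs
        obtain ⟨hsub, hcard, hmem⟩ := mem_D.mp hs
        rw [show (a'+2)+(b'+1)-1 = a'+b'+2 from by omega] at hmem
        rw [Finset.mem_powersetCard]
        constructor
        · intro j hj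
          rw [Finset.mem_erase] at hj
          have := Finset.mem_range.mp (hsub hj.2)
          exact Finset.mem_range.mpr (by omega)
        · rw [Finset.card_erase_of_mem hmem, hcard]
          norm_num
      · intro t ht
        rw [Finset.mem_powersetCard] at ht
        obtain ⟨hsub, hcard⟩ := ht
        have hnotmem : a'+b'+2 ∉ t := fun h => by
          have := Finset.mem_range.mp (hsub h); omega
        rw [mem_D]
        refine ⟨?_, ?_, ?_⟩
        · intro j hj
          rw [Finset.mem_insert] at hj
          rcases hj with rfl | hj
          · exact Finset.mem_range.mpr (by omega)
          · have := Finset.mem_range.mp (hsub hj)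
            exact Finset.mem_range.mpr (by omega)
        · rw [Finset.card_insert_of_notMem hnotmem, hcard]
        · rw [show (a'+2)+(b'+1)-1 = a'+b'+2 from by omega]
          exact Finset.mem_insert_self _ _
      · intro s hs
        obtain ⟨-, -, hmem⟩ := mem_D.mp hs
        rw [show (a'+2)+(b'+1)-1 = a'+b'+2 from by omega] at hmem
        exact Finset.insert_erase hmem
      · intro t ht
        rw [Finset.mem_powersetCard] at ht
        have hnotmem : a'+b'+2 ∉ t := fun h => by
          have := Finset.mem_range.mp (ht.1 h); omega
        exact Finset.erase_insert hnotmem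
      · intro s hs
        obtain ⟨hsub, hcard, hmem⟩ := mem_D.mp hs
        rw [show (a'+2)+(b'+1)-1 = a'+b'+2 from by omega] at hmem
        congr 1
        rw [show (a'+2)+(b'+1) = (a'+b'+1)+2 from by omega, majN_peel (a'+b'+1)]
        have e1 : shw u v s (a'+b'+1+1) = u (a'+1) := by
          rw [show a'+b'+1+1 = a'+b'+2 from by omega]
          rw [shw_last u v (by rw [show a'+b'+2+1 = (a'+2)+(b'+1) from by omega]; exact hsub) hmem,
            hcard]
          norm_num
        congr 1
        · rw [show a'+b'+1+1 = a'+b'+2 from by omega]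
          exact majN_congr fun i hi => (shw_erase u v hi).symm
        · rw [e1, shw_erase u v (show a'+b'+1 < a'+b'+2 from by omega)]
    rw [hsplit]
    have hPA : ((range (a'+b'+2)).powersetCard (a'+1)).filter (fun t => a'+b'+1 ∈ t)
        = D (a'+1) (b'+1) := by
      rw [D, show (a'+1)+(b'+1) = a'+b'+2 from by omega,
        show a'+b'+2-1 = a'+b'+1 from by omega]
    have hA : ∑ t ∈ ((range (a'+b'+2)).powersetCard (a'+1)).filter (fun t => a'+b'+1 ∈ t),
          (RatFunc.X : RatFunc ℚ) ^ (majN (a'+b'+2) (shw u v t)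
            + (if u (a'+1) < shw u v t (a'+b'+1) then a'+b'+2 else 0))
        = RatFunc.X ^ (if u (a'+1) < u a' then a'+b'+2 else 0)
            * ∑ t ∈ D (a'+1) (b'+1),
              (RatFunc.X : RatFunc ℚ) ^ majN ((a'+1)+(b'+1)) (shw u v t) := by
      rw [hPA, Finset.mul_sum]
      refine Finset.sum_congr rfl fun t ht => ?_
      obtain ⟨hsub, hcard, hmem⟩ := mem_D.mp ht
      rw [show (a'+1)+(b'+1)-1 = a'+b'+1 from by omega] at hmem
      have e1 : shw u v t (a'+b'+1) = u a' := by
        rw [shw_last u v (by rw [show a'+b'+1+1 = (a'+1)+(b'+1) from by omega]; exact hsub) hmem,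
          hcard]
        norm_num
      rw [e1, show (a'+1)+(b'+1) = a'+b'+2 from by omega, ← pow_add]
      congr 1
      exact add_comm _ _
    have hB : ∑ t ∈ ((range (a'+b'+2)).powersetCard (a'+1)).filter (fun t => ¬ a'+b'+1 ∈ t),
          (RatFunc.X : RatFunc ℚ) ^ (majN (a'+b'+2) (shw u v t)
            + (if u (a'+1) < shw u v t (a'+b'+1) then a'+b'+2 else 0))
        = RatFunc.X ^ (if u (a'+1) < v b' then a'+b'+2 else 0)
            * ∑ t ∈ D (b'+1) (a'+1),
              (RatFunc.X : RatFunc ℚ) ^ majN ((b'+1)+(a'+1)) (shw v u t) := by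
      rw [Finset.mul_sum]
      refine Finset.sum_nbij' (fun t => range (a'+b'+2) \ t) (fun t => range (a'+b'+2) \ t)
        ?_ ?_ ?_ ?_ ?_
      · intro t ht
        rw [Finset.mem_filter, Finset.mem_powersetCard] at ht
        obtain ⟨⟨hsub, hcard⟩, hnot⟩ := ht
        rw [mem_D]
        refine ⟨?_, ?_, ?_⟩
        · rw [show (b'+1)+(a'+1) = a'+b'+2 from by omega]
          exact Finset.sdiff_subset
        · rw [Finset.card_sdiff_of_subset hsub, Finset.card_range, hcard]
          omega
        · rw [show (b'+1)+(a'+1)-1 = a'+b'+1 from by omega, Finset.mem_sdiff]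
          exact ⟨Finset.mem_range.mpr (by omega), hnot⟩
      · intro t ht
        obtain ⟨hsub, hcard, hmem⟩ := mem_D.mp ht
        rw [show (b'+1)+(a'+1) = a'+b'+2 from by omega] at hsub
        rw [show (b'+1)+(a'+1)-1 = a'+b'+1 from by omega] at hmem
        rw [Finset.mem_filter, Finset.mem_powersetCard]
        refine ⟨⟨Finset.sdiff_subset, ?_⟩, ?_⟩
        · rw [Finset.card_sdiff_of_subset hsub, Finset.card_range, hcard]
          omega
        · simp only [Finset.mem_sdiff, not_and, not_not]
          exact fun _ => hmem
      · intro t ht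
        rw [Finset.mem_filter, Finset.mem_powersetCard] at ht
        show range (a'+b'+2) \ (range (a'+b'+2) \ t) = t
        rw [Finset.sdiff_sdiff_self_left]
        exact Finset.inter_eq_right.mpr ht.1.1
      · intro t ht
        obtain ⟨hsub, -, -⟩ := mem_D.mp ht
        rw [show (b'+1)+(a'+1) = a'+b'+2 from by omega] at hsub
        show range (a'+b'+2) \ (range (a'+b'+2) \ t) = t
        rw [Finset.sdiff_sdiff_self_left]
        exact Finset.inter_eq_right.mpr hsub
      · intro t ht
        rw [Finset.mem_filter, Finset.mem_powersetCard] at ht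
        obtain ⟨⟨hsub, hcard⟩, hnot⟩ := ht
        have e1 : shw u v t (a'+b'+1) = v b' := by
          rw [shw_last_not u v (by rw [show a'+b'+1+1 = a'+b'+2 from by omega]; exact hsub) hnot,
            hcard, show a'+b'+1-(a'+1) = b' from by omega]
        have e2 : majN (a'+b'+2) (shw u v t) = majN ((b'+1)+(a'+1)) (shw v u (range (a'+b'+2) \ t)) := by
          rw [show (b'+1)+(a'+1) = a'+b'+2 from by omega]
          exact majN_congr fun i hi => shw_compl u v hsub hi
        rw [e1, e2, ← pow_add]
        congr 1
        exact add_comm _ _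
    rw [← Finset.sum_filter_add_sum_filter_not ((range (a'+b'+2)).powersetCard (a'+1))
      (fun t => a'+b'+1 ∈ t), hA, hB]
    have IH1 := ih ((a'+1)+(b'+1)) (by omega) (a'+1) (b'+1) rfl (by omega) u v
      (fun i j hi hj => hu i j (by omega) (by omega)) hv
      (fun i j hi hj => huv i j (by omega) hj)
    have IH2 := ih ((b'+1)+(a'+1)) (by omega) (b'+1) (a'+1) rfl (by omega) v u hv
      (fun i j hi hj => hu i j (by omega) (by omega))
      (fun i j hi hj => (huv j i (by omega) (by omega)).symm)
    rw [if_neg (by omega : ¬ b'+1 = 0), show (a'+1)-1 = a' from by omega,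
      show (b'+1)-1 = b' from by omega] at IH1
    rw [if_neg (by omega : ¬ a'+1 = 0), show (b'+1)-1 = b' from by omega,
      show (a'+1)-1 = a' from by omega] at IH2
    rw [IH1, IH2]
    rw [if_neg (by omega : ¬ b'+1 = 0), show (a'+2)-1 = a'+1 from by omega,
      show (b'+1)-1 = b' from by omega]
    rw [majN_peel a' u]
    have hne1 : u a' ≠ u (a'+1) := fun h => by
      have := hu a' (a'+1) (by omega) (by omega) h; omega
    have hne2 : u (a'+1) ≠ v b' := huv _ _ (by omega) (by omega)
    have hne3 : u a' ≠ v b' := huv _ _ (by omega) (by omega)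
    rw [B_comm b' (a'+1)]
    by_cases h1 : u (a'+1) < u a' <;> by_cases h2 : u (a'+1) < v b' <;>
      by_cases h3 : u a' < v b'
    all_goals first
      | (exfalso; omega)
      | (simp only [h1, h2, h3, if_true, if_false]
         first
           | rw [if_pos (show v b' < u a' from by omega)]
           | rw [if_neg (show ¬ v b' < u a' from by omega)]
         first
           | (rw [pascal1 a' b']; ring1)
           | (rw [pascal2 a' b']; ring1))

/-- Refined shuffle theorem: if `σ_m < π_n`, summing `q^{maj α}` over the shuffles `α`
of `σ` and `π` whose last letter is `σ_m` (i.e. the last position belongs to the set of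
`σ`-positions) gives `q^{maj σ + maj π + n} ⋅ C(m+n-1, n)_q`. -/
theorem stmt19 (m n : ℕ) (hm : 0 < m) (hn : 0 < n)
    (σ : Fin m → ℕ) (π : Fin n → ℕ)
    (hσpos : ∀ i, 0 < σ i) (hπpos : ∀ j, 0 < π j)
    (hσ : Function.Injective σ) (hπ : Function.Injective π)
    (hdisj : ∀ i j, σ i ≠ π j)
    (hlast : σ ⟨m - 1, by omega⟩ < π ⟨n - 1, by omega⟩) :
    ∑ s ∈ Finset.univ.filter (fun s : Finset (Fin (m + n)) =>
        s.card = m ∧ (⟨m + n - 1, by omega⟩ : Fin (m + n)) ∈ s),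
        (RatFunc.X : RatFunc ℚ) ^ majW (shuffleWord σ π s)
      = RatFunc.X ^ (majW σ + majW π + n) *
          (qfac RatFunc.X (m + n - 1) / (qfac RatFunc.X n * qfac RatFunc.X (m - 1))) := by
  classical
  -- pointwise comparison of shuffleWord and shw
  have hpoint : ∀ s : Finset (Fin (m+n)), s.card = m →
      ∀ i : Fin (m+n), shuffleWord σ π s i
        = shw (extnd σ) (extnd π) (s.map Fin.valEmbedding) i.1 := by
    intro s hcard i
    have hmem : i ∈ s ↔ i.1 ∈ s.map Fin.valEmbedding := (Finset.mem_map' _).symm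
    have hfil : (s.map Fin.valEmbedding).filter (· < i.1)
        = (s.filter (fun j => j < i)).map Fin.valEmbedding := by
      rw [Finset.filter_map]
      congr 1
    have hfilcard : ((s.map Fin.valEmbedding).filter (· < i.1)).card
        = (s.filter (fun j => j < i)).card := by
      rw [hfil, Finset.card_map]
    have huniv : ((univ : Finset (Fin (m+n))).filter (fun j => j < i)).card = i.1 := by
      have him : (((univ : Finset (Fin (m+n))).filter (fun j => j < i)).map Fin.valEmbedding)
          = range i.1 := by
        ext k
        simp only [Finset.mem_map, Finset.mem_filter, Finset.mem_univ, true_and,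
          Fin.valEmbedding_apply, Finset.mem_range]
        constructor
        · rintro ⟨j, hj, rfl⟩
          exact hj
        · intro hk
          exact ⟨⟨k, by omega⟩, by simpa [Fin.lt_def] using hk, rfl⟩
      rw [← Finset.card_range i.1, ← him, Finset.card_map]
    have hsplit : ((sᶜ).filter (fun j => j < i)).card
        = i.1 - (s.filter (fun j => j < i)).card := by
      have hsd : (sᶜ).filter (fun j => j < i)
          = (univ.filter (fun j => j < i)) \ (s.filter (fun j => j < i)) := by
        ext j
        simp only [Finset.mem_filter, Finset.mem_compl, Finset.mem_sdiff, Finset.mem_univ,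
          true_and]
        tauto
      rw [hsd, Finset.card_sdiff_of_subset (Finset.filter_subset_filter _ (Finset.subset_univ s)), huniv]
    by_cases hi : i ∈ s
    · have hrlt : (s.filter (fun j => j < i)).card < m := by
        have hsub : s.filter (fun j => j < i) ⊆ s.erase i := by
          intro j hj
          rw [Finset.mem_filter] at hj
          exact Finset.mem_erase.mpr ⟨ne_of_lt hj.2, hj.1⟩
        calc (s.filter (fun j => j < i)).card ≤ (s.erase i).card := Finset.card_le_card hsub
          _ = m - 1 := by rw [Finset.card_erase_of_mem hi, hcard]
          _ < m := by omega
      rw [shuffleWord, shw]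
      rw [if_pos hi, if_pos (hmem.mp hi), dif_pos hrlt, hfilcard, extnd_lt σ hrlt]
    · have hclt : ((sᶜ).filter (fun j => j < i)).card < n := by
        have hic : i ∈ sᶜ := Finset.mem_compl.mpr hi
        have hsub : (sᶜ).filter (fun j => j < i) ⊆ (sᶜ).erase i := by
          intro j hj
          rw [Finset.mem_filter] at hj
          exact Finset.mem_erase.mpr ⟨ne_of_lt hj.2, hj.1⟩
        have hcc : (sᶜ).card = n := by
          rw [Finset.card_compl, hcard]
          simp
        calc ((sᶜ).filter (fun j => j < i)).card ≤ ((sᶜ).erase i).card :=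
              Finset.card_le_card hsub
          _ = n - 1 := by rw [Finset.card_erase_of_mem hic, hcc]
          _ < n := by omega
      rw [shuffleWord, shw]
      rw [if_neg hi, if_neg (fun hh => hi (hmem.mpr hh)), dif_pos hclt,
        extnd_lt π (show i.1 - ((s.map Fin.valEmbedding).filter (· < i.1)).card < n from by
          rw [hfilcard]; omega)]
      exact congrArg π (Fin.ext (show ((sᶜ).filter (fun j => j < i)).card
        = i.1 - ((s.map Fin.valEmbedding).filter (· < i.1)).card from by
          rw [hfilcard]; exact hsplit))
  have hmapfil : ∀ t : Finset ℕ, t ⊆ range (m+n) →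
      ((univ : Finset (Fin (m+n))).filter (fun i => i.1 ∈ t)).map Fin.valEmbedding = t := by
    intro t ht
    ext k
    simp only [Finset.mem_map, Finset.mem_filter, Finset.mem_univ, true_and,
      Fin.valEmbedding_apply]
    constructor
    · rintro ⟨j, hj, rfl⟩
      exact hj
    · intro hk
      have hk2 := Finset.mem_range.mp (ht hk)
      exact ⟨⟨k, hk2⟩, hk, rfl⟩
  have hbij : ∑ s ∈ Finset.univ.filter (fun s : Finset (Fin (m + n)) =>
        s.card = m ∧ (⟨m + n - 1, by omega⟩ : Fin (m + n)) ∈ s),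
        (RatFunc.X : RatFunc ℚ) ^ majW (shuffleWord σ π s)
      = ∑ t ∈ D m n, (RatFunc.X : RatFunc ℚ) ^ majN (m+n) (shw (extnd σ) (extnd π) t) := by
    refine Finset.sum_nbij' (fun s => s.map Fin.valEmbedding)
      (fun t => (univ : Finset (Fin (m+n))).filter (fun i => i.1 ∈ t)) ?_ ?_ ?_ ?_ ?_
    · intro s hs
      rw [Finset.mem_filter] at hs
      obtain ⟨-, hcard, hlmem⟩ := hs
      rw [mem_D]
      refine ⟨?_, ?_, ?_⟩
      · intro k hk
        rw [Finset.mem_map] at hk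
        obtain ⟨j, -, rfl⟩ := hk
        exact Finset.mem_range.mpr j.2
      · rw [Finset.card_map, hcard]
      · exact (Finset.mem_map' _).mpr hlmem
    · intro t ht
      obtain ⟨hsub, hcard, hlmem⟩ := mem_D.mp ht
      rw [Finset.mem_filter]
      refine ⟨Finset.mem_univ _, ?_, ?_⟩
      · rw [← Finset.card_map Fin.valEmbedding, hmapfil t hsub, hcard]
      · rw [Finset.mem_filter]
        exact ⟨Finset.mem_univ _, hlmem⟩
    · intro s hs
      ext i
      simp only [Finset.mem_filter, Finset.mem_univ, true_and]
      exact (Finset.mem_map' _)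
    · intro t ht
      obtain ⟨hsub, -, -⟩ := mem_D.mp ht
      exact hmapfil t hsub
    · intro s hs
      rw [Finset.mem_filter] at hs
      obtain ⟨-, hcard, -⟩ := hs
      congr 1
      exact majW_eq _ _ (fun k h => (hpoint s hcard ⟨k, h⟩).symm)
  rw [hbij, main (m+n) m n rfl (by omega) (extnd σ) (extnd π)
    (fun i j hi hj heq => by
      rw [extnd_lt σ hi, extnd_lt σ hj] at heq
      simpa using congrArg Fin.val (hσ heq))
    (fun i j hi hj heq => by
      rw [extnd_lt π hi, extnd_lt π hj] at heq
      simpa using congrArg Fin.val (hπ heq))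
    (fun i j hi hj heq => by
      rw [extnd_lt σ hi, extnd_lt π hj] at heq
      exact hdisj _ _ heq)]
  have hcmp : extnd σ (m-1) < extnd π (n-1) := by
    rw [extnd_lt σ (by omega : m-1 < m), extnd_lt π (by omega : n-1 < n)]
    exact hlast
  rw [if_neg (by omega : ¬ n = 0), if_pos hcmp,
    ← majW_eq σ (extnd σ) (fun k h => extnd_lt σ h),
    ← majW_eq π (extnd π) (fun k h => extnd_lt π h), B,
    show (m-1)+n = m+n-1 from by omega,
    mul_comm (qfac (RatFunc.X : RatFunc ℚ) (m-1)) (qfac RatFunc.X n)]
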